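/- Let d ≥ 1, p ≥ 1, let Ω ⊂ ℝ^d be a nonempty open proper subset and f : Ω → ℝ measurable. Suppose that for some −∞ ≤ α₁ < α₂ ≤ ∞, −∞ ≤ β₁ < β₂ ≤ ∞ and 0 ≤ s₁ < s₂ ≤ 1, the double integral I(s, α, β) = ∫_Ω ∫_Ω |f(x) − f(y)|^p |x−y|^{−d−sp} d_Ω(x)^{−α} d_Ω(y)^{−β} dy dx is finite for all s ∈ (s₁, s₂), α ∈ (α₁, α₂), β ∈ (β₁, β₂). Then the function (s, α, β) ↦ I(s, α, β) is continuous on (s₁, s₂) × (α₁, α₂) × (β₁, β₂). -/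

import Mathlib

open MeasureTheory Metric Set Filter

noncomputable def Fker (d : ℕ) (p : ℝ) (Ω : Set (EuclideanSpace ℝ (Fin d)))
    (f : EuclideanSpace ℝ (Fin d) → ℝ) (q : ℝ × ℝ × ℝ)
    (z : EuclideanSpace ℝ (Fin d) × EuclideanSpace ℝ (Fin d)) : ENNReal :=
  ENNReal.ofReal
    (|f z.1 - f z.2| ^ p / ‖z.1 - z.2‖ ^ ((d : ℝ) + q.1 * p)
      * (infDist z.1 (frontier Ω)) ^ (-q.2.1) * (infDist z.2 (frontier Ω)) ^ (-q.2.2))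

open Topology in
/-- Continuity of weighted Gagliardo seminorms in the parameters `(s, α, β)`. -/
theorem gagliardo_seminorm_continuous
    (d : ℕ) (hd : 1 ≤ d) (p : ℝ) (hp : 1 ≤ p)
    (Ω : Set (EuclideanSpace ℝ (Fin d))) (hΩo : IsOpen Ω) (hΩne : Ω.Nonempty)
    (hΩp : Ω ≠ Set.univ)
    (f : EuclideanSpace ℝ (Fin d) → ℝ) (hf : Measurable f)
    (s₁ s₂ : ℝ) (hs₁ : 0 ≤ s₁) (hs : s₁ < s₂) (hs₂ : s₂ ≤ 1)
    (α₁ α₂ β₁ β₂ : EReal) (hα : α₁ < α₂) (hβ : β₁ < β₂)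
    (I : ℝ → ℝ → ℝ → ENNReal)
    (hI : ∀ s α β : ℝ, I s α β =
      ∫⁻ x in Ω, ∫⁻ y in Ω, ENNReal.ofReal
        (|f x - f y| ^ p / ‖x - y‖ ^ ((d : ℝ) + s * p)
          * (infDist x (frontier Ω)) ^ (-α) * (infDist y (frontier Ω)) ^ (-β)))
    (hfin : ∀ s α β : ℝ, s ∈ Set.Ioo s₁ s₂ →
      α₁ < (α : EReal) → (α : EReal) < α₂ → β₁ < (β : EReal) → (β : EReal) < β₂ →
      I s α β ≠ ⊤) :
    ContinuousOn (fun q : ℝ × ℝ × ℝ => (I q.1 q.2.1 q.2.2).toReal)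
      {q : ℝ × ℝ × ℝ | q.1 ∈ Set.Ioo s₁ s₂ ∧
        α₁ < (q.2.1 : EReal) ∧ (q.2.1 : EReal) < α₂ ∧
        β₁ < (q.2.2 : EReal) ∧ (q.2.2 : EReal) < β₂} := by
  haveI : Nonempty (Fin d) := ⟨⟨0, hd⟩⟩
  have hd1 : (1 : ℝ) ≤ (d : ℝ) := by exact_mod_cast hd
  have hp0 : (0 : ℝ) < p := lt_of_lt_of_le one_pos hp
  have hfr : (frontier Ω).Nonempty := by
    rw [nonempty_iff_ne_empty]
    intro he
    rcases isClopen_iff.1 (isClopen_iff_frontier_eq_empty.2 he) with h | h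
    · exact hΩne.ne_empty h
    · exact hΩp h
  have hdist : ∀ x ∈ Ω, 0 < infDist x (frontier Ω) := by
    intro x hx
    rw [← isClosed_frontier.notMem_iff_infDist_pos hfr]
    exact fun hxf => (disjoint_frontier_iff_isOpen.2 hΩo).le_bot ⟨hxf, hx⟩
  have hrm : ∀ c : ℝ, Measurable fun t : ℝ => t ^ c := fun c => by measurability
  have hFmeas : ∀ q, Measurable (Fker d p Ω f q) := by
    intro q
    apply ENNReal.measurable_ofReal.comp
    refine Measurable.mul (Measurable.mul (Measurable.div ?_ ?_) ?_) ?_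
    · exact (hrm p).comp ((hf.comp measurable_fst).sub (hf.comp measurable_snd)).abs
    · exact (hrm _).comp ((continuous_fst.sub continuous_snd).norm).measurable
    · exact (hrm _).comp ((continuous_infDist_pt (frontier Ω)).comp continuous_fst).measurable
    · exact (hrm _).comp ((continuous_infDist_pt (frontier Ω)).comp continuous_snd).measurable
  have hIF : ∀ q : ℝ × ℝ × ℝ, I q.1 q.2.1 q.2.2 =
      ∫⁻ z, Fker d p Ω f q z ∂((volume.restrict Ω).prod (volume.restrict Ω)) := by
    intro q
    rw [hI]
    exact (lintegral_prod (Fker d p Ω f q) (hFmeas q).aemeasurable).symm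
  have hae : ∀ᵐ z ∂((volume.restrict Ω).prod (volume.restrict Ω)), z.1 ∈ Ω ∧ z.2 ∈ Ω := by
    have h := ae_restrict_mem (μ := (volume : Measure (EuclideanSpace ℝ (Fin d))).prod volume)
      (hΩo.measurableSet.prod hΩo.measurableSet)
    rw [← Measure.prod_restrict] at h
    exact h.mono fun z hz => hz
  have hdiag : ∀ᵐ z ∂((volume.restrict Ω).prod (volume.restrict Ω)), z.1 ≠ z.2 := by
    have hDm : MeasurableSet {z : EuclideanSpace ℝ (Fin d) × EuclideanSpace ℝ (Fin d) |
        z.1 = z.2} := by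
      have he : {z : EuclideanSpace ℝ (Fin d) × EuclideanSpace ℝ (Fin d) | z.1 = z.2}
          = (fun z : EuclideanSpace ℝ (Fin d) × EuclideanSpace ℝ (Fin d) => z.1 - z.2) ⁻¹' {0} := by
        ext z; simp [sub_eq_zero]
      rw [he]
      exact (measurable_fst.sub measurable_snd) (measurableSet_singleton 0)
    have h0 : ((volume.restrict Ω).prod (volume.restrict Ω))
        {z : EuclideanSpace ℝ (Fin d) × EuclideanSpace ℝ (Fin d) | z.1 = z.2} = 0 := by
      rw [Measure.prod_apply hDm]
      have hx : ∀ x : EuclideanSpace ℝ (Fin d), (volume.restrict Ω)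
          (Prod.mk x ⁻¹' {z : EuclideanSpace ℝ (Fin d) × EuclideanSpace ℝ (Fin d) | z.1 = z.2})
          = 0 := by
        intro x
        have hxeq : (Prod.mk x ⁻¹' {z : EuclideanSpace ℝ (Fin d) ×
            EuclideanSpace ℝ (Fin d) | z.1 = z.2}) = {x} := by
          ext y; simp [eq_comm]
        rw [hxeq, Measure.restrict_apply (measurableSet_singleton x)]
        exact measure_mono_null inter_subset_left (measure_singleton x)
      simp only [hx, lintegral_zero]
    rw [ae_iff]
    simpa using h0
  rintro ⟨s₀, α₀, β₀⟩ ⟨hs₀, hα₀1, hα₀2, hβ₀1, hβ₀2⟩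
  obtain ⟨slo, hslo1, hslo2⟩ := exists_between hs₀.1
  obtain ⟨shi, hshi1, hshi2⟩ := exists_between hs₀.2
  obtain ⟨alo, halo1, halo2⟩ := EReal.exists_between_coe_real hα₀1
  obtain ⟨ahi, hahi1, hahi2⟩ := EReal.exists_between_coe_real hα₀2
  obtain ⟨blo, hblo1, hblo2⟩ := EReal.exists_between_coe_real hβ₀1
  obtain ⟨bhi, hbhi1, hbhi2⟩ := EReal.exists_between_coe_real hβ₀2
  have halo2' : alo < α₀ := by exact_mod_cast halo2
  have hahi1' : α₀ < ahi := by exact_mod_cast hahi1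
  have hblo2' : blo < β₀ := by exact_mod_cast hblo2
  have hbhi1' : β₀ < bhi := by exact_mod_cast hbhi1
  have hslo0 : 0 < slo := lt_of_le_of_lt hs₁ hslo1
  set pick : EuclideanSpace ℝ (Fin d) × EuclideanSpace ℝ (Fin d) → ℝ × ℝ × ℝ :=
    fun z => (if ‖z.1 - z.2‖ ≤ 1 then shi else slo,
      if infDist z.1 (frontier Ω) ≤ 1 then ahi else alo,
      if infDist z.2 (frontier Ω) ≤ 1 then bhi else blo) with hpick
  -- domination
  have hdom : ∀ q ∈ Set.Ioo slo shi ×ˢ (Set.Ioo alo ahi ×ˢ Set.Ioo blo bhi),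
      ∀ z : EuclideanSpace ℝ (Fin d) × EuclideanSpace ℝ (Fin d), z.1 ∈ Ω → z.2 ∈ Ω →
      Fker d p Ω f q z ≤ Fker d p Ω f (pick z) z := by
    rintro ⟨s, α, β⟩ ⟨hsU, hαU, hβU⟩ z hz1 hz2
    have hu := hdist _ hz1
    have hv := hdist _ hz2
    have hA0 : (0 : ℝ) ≤ |f z.1 - f z.2| ^ p := Real.rpow_nonneg (abs_nonneg _) p
    have hs0 : (0 : ℝ) < s := hslo0.trans hsU.1
    unfold Fker
    apply ENNReal.ofReal_le_ofReal
    rcases eq_or_lt_of_le (norm_nonneg (z.1 - z.2)) with h0 | hrpos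
    · have he1 : ((d : ℝ) + s * p) ≠ 0 := by positivity
      rw [← h0, Real.zero_rpow he1, div_zero, zero_mul, zero_mul]
      positivity
    · have hfac1 : ‖z.1 - z.2‖ ^ ((d : ℝ) + (pick z).1 * p) ≤ ‖z.1 - z.2‖ ^ ((d : ℝ) + s * p) := by
        simp only [hpick]
        split_ifs with h1
        · exact Real.rpow_le_rpow_of_exponent_ge hrpos h1
            (add_le_add_right (mul_le_mul_of_nonneg_right hsU.2.le hp0.le) _)
        · exact Real.rpow_le_rpow_of_exponent_le (not_le.1 h1).le
            (add_le_add_right (mul_le_mul_of_nonneg_right hsU.1.le hp0.le) _)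
      have hfac2 : infDist z.1 (frontier Ω) ^ (-α)
          ≤ infDist z.1 (frontier Ω) ^ (-(pick z).2.1) := by
        simp only [hpick]
        split_ifs with h1
        · exact Real.rpow_le_rpow_of_exponent_ge hu h1 (neg_le_neg hαU.2.le)
        · exact Real.rpow_le_rpow_of_exponent_le (not_le.1 h1).le (neg_le_neg hαU.1.le)
      have hfac3 : infDist z.2 (frontier Ω) ^ (-β)
          ≤ infDist z.2 (frontier Ω) ^ (-(pick z).2.2) := by
        simp only [hpick]
        split_ifs with h1
        · exact Real.rpow_le_rpow_of_exponent_ge hv h1 (neg_le_neg hβU.2.le)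
        · exact Real.rpow_le_rpow_of_exponent_le (not_le.1 h1).le (neg_le_neg hβU.1.le)
      have hXpos : 0 < ‖z.1 - z.2‖ ^ ((d : ℝ) + (pick z).1 * p) :=
        Real.rpow_pos_of_pos hrpos _
      have step1 : |f z.1 - f z.2| ^ p / ‖z.1 - z.2‖ ^ ((d : ℝ) + s * p)
          ≤ |f z.1 - f z.2| ^ p / ‖z.1 - z.2‖ ^ ((d : ℝ) + (pick z).1 * p) := by
        gcongr
      refine mul_le_mul (mul_le_mul step1 hfac2 (Real.rpow_nonneg infDist_nonneg _)
        (div_nonneg hA0 hXpos.le)) hfac3 (Real.rpow_nonneg infDist_nonneg _) ?_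
      exact mul_nonneg (div_nonneg hA0 hXpos.le) (Real.rpow_nonneg infDist_nonneg _)
  set C : Finset (ℝ × ℝ × ℝ) :=
    ({slo, shi} : Finset ℝ) ×ˢ (({alo, ahi} : Finset ℝ) ×ˢ ({blo, bhi} : Finset ℝ)) with hC
  have hCmem : ∀ z, pick z ∈ C := by
    intro z
    rw [hC]
    refine Finset.mem_product.2 ⟨?_, Finset.mem_product.2 ⟨?_, ?_⟩⟩ <;>
      simp only [hpick] <;> split_ifs <;> simp
  have hGfin : ∫⁻ z, Fker d p Ω f (pick z) z
      ∂((volume.restrict Ω).prod (volume.restrict Ω)) ≠ ⊤ := by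
    have hle : ∫⁻ z, Fker d p Ω f (pick z) z ∂((volume.restrict Ω).prod (volume.restrict Ω))
        ≤ ∑ c ∈ C, ∫⁻ z, Fker d p Ω f c z ∂((volume.restrict Ω).prod (volume.restrict Ω)) := by
      rw [← lintegral_finset_sum _ fun c _ => hFmeas c]
      exact lintegral_mono fun z => Finset.single_le_sum (f := fun c => Fker d p Ω f c z)
        (fun i _ => zero_le) (hCmem z)
    refine ne_top_of_le_ne_top (ENNReal.sum_ne_top.2 fun c hc => ?_) hle
    rw [← hIF c]
    rw [hC, Finset.mem_product] at hc
    obtain ⟨hc1, hc23⟩ := hc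
    rw [Finset.mem_product] at hc23
    obtain ⟨hc2, hc3⟩ := hc23
    have hc1' : c.1 = slo ∨ c.1 = shi := by simpa using hc1
    have hc2' : c.2.1 = alo ∨ c.2.1 = ahi := by simpa using hc2
    have hc3' : c.2.2 = blo ∨ c.2.2 = bhi := by simpa using hc3
    apply hfin
    · rcases hc1' with h | h <;> rw [h]
      · exact ⟨hslo1, hslo2.trans hs₀.2⟩
      · exact ⟨hs₀.1.trans hshi1, hshi2⟩
    · rcases hc2' with h | h <;> rw [h]
      · exact halo1
      · exact hα₀1.trans hahi1
    · rcases hc2' with h | h <;> rw [h]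
      · exact halo2.trans hα₀2
      · exact hahi2
    · rcases hc3' with h | h <;> rw [h]
      · exact hblo1
      · exact hβ₀1.trans hbhi1
    · rcases hc3' with h | h <;> rw [h]
      · exact hblo2.trans hβ₀2
      · exact hbhi2
  have hUnhds : (Set.Ioo slo shi ×ˢ (Set.Ioo alo ahi ×ˢ Set.Ioo blo bhi))
      ∈ 𝓝 ((s₀, α₀, β₀) : ℝ × ℝ × ℝ) :=
    prod_mem_nhds (Ioo_mem_nhds hslo2 hshi1)
      (prod_mem_nhds (Ioo_mem_nhds halo2' hahi1') (Ioo_mem_nhds hblo2' hbhi1'))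
  have hbound : ∀ᶠ q in 𝓝[{q : ℝ × ℝ × ℝ | q.1 ∈ Set.Ioo s₁ s₂ ∧
        α₁ < (q.2.1 : EReal) ∧ (q.2.1 : EReal) < α₂ ∧
        β₁ < (q.2.2 : EReal) ∧ (q.2.2 : EReal) < β₂}] (s₀, α₀, β₀),
      ∀ᵐ z ∂((volume.restrict Ω).prod (volume.restrict Ω)),
        Fker d p Ω f q z ≤ Fker d p Ω f (pick z) z := by
    filter_upwards [mem_nhdsWithin_of_mem_nhds hUnhds] with q hq
    filter_upwards [hae] with z hz
    exact hdom q hq z hz.1 hz.2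
  have hlim : ∀ᵐ z ∂((volume.restrict Ω).prod (volume.restrict Ω)),
      Tendsto (fun q : ℝ × ℝ × ℝ => Fker d p Ω f q z)
        (𝓝[{q : ℝ × ℝ × ℝ | q.1 ∈ Set.Ioo s₁ s₂ ∧
          α₁ < (q.2.1 : EReal) ∧ (q.2.1 : EReal) < α₂ ∧
          β₁ < (q.2.2 : EReal) ∧ (q.2.2 : EReal) < β₂}] (s₀, α₀, β₀))
        (𝓝 (Fker d p Ω f (s₀, α₀, β₀) z)) := by
    filter_upwards [hae, hdiag] with z hz hzne
    have hu := hdist _ hz.1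
    have hv := hdist _ hz.2
    have hrne : ‖z.1 - z.2‖ ≠ 0 := norm_ne_zero_iff.2 (sub_ne_zero_of_ne hzne)
    have hrpos : 0 < ‖z.1 - z.2‖ := lt_of_le_of_ne (norm_nonneg _) (Ne.symm hrne)
    have hc : ContinuousAt (fun q : ℝ × ℝ × ℝ => Fker d p Ω f q z) (s₀, α₀, β₀) := by
      unfold Fker
      apply ENNReal.continuous_ofReal.continuousAt.comp
      refine ContinuousAt.mul (ContinuousAt.mul (ContinuousAt.div continuousAt_const ?_ ?_) ?_) ?_
      · exact (Real.continuousAt_const_rpow hrne).comp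
          (continuousAt_const.add (continuous_fst.continuousAt.mul continuousAt_const))
      · exact (Real.rpow_pos_of_pos hrpos _).ne'
      · exact (Real.continuousAt_const_rpow hu.ne').comp
          ((continuous_fst.comp continuous_snd).continuousAt.neg)
      · exact (Real.continuousAt_const_rpow hv.ne').comp
          ((continuous_snd.comp continuous_snd).continuousAt.neg)
    exact hc.tendsto.mono_left nhdsWithin_le_nhds
  have hne : I s₀ α₀ β₀ ≠ ⊤ := hfin s₀ α₀ β₀ hs₀ hα₀1 hα₀2 hβ₀1 hβ₀2
  have hmain := tendsto_lintegral_filter_of_dominated_convergence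
    (μ := (volume.restrict Ω).prod (volume.restrict Ω))
    (fun z => Fker d p Ω f (pick z) z) (Eventually.of_forall hFmeas) hbound hGfin hlim
  have hmain' : Tendsto (fun q : ℝ × ℝ × ℝ => I q.1 q.2.1 q.2.2)
      (𝓝[{q : ℝ × ℝ × ℝ | q.1 ∈ Set.Ioo s₁ s₂ ∧
        α₁ < (q.2.1 : EReal) ∧ (q.2.1 : EReal) < α₂ ∧
        β₁ < (q.2.2 : EReal) ∧ (q.2.2 : EReal) < β₂}] (s₀, α₀, β₀))
      (𝓝 (I s₀ α₀ β₀)) := by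
    have heq : I s₀ α₀ β₀ = ∫⁻ z, Fker d p Ω f (s₀, α₀, β₀) z
        ∂((volume.restrict Ω).prod (volume.restrict Ω)) := hIF (s₀, α₀, β₀)
    rw [heq]
    exact Filter.Tendsto.congr (fun q => (hIF q).symm) hmain
  exact (ENNReal.tendsto_toReal hne).comp hmain'
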